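/- arXiv:2103.07842 — 2 statements merged into one kernel-verified Lean document; each statement's English description precedes it below -/
import Mathlib

section
/- Let P : {0,1}^n → ℝ be a multilinear polynomial of total degree at most d. Then there exists a univariate real polynomial p of degree at most d such that for every i ∈ {0, ..., n}, p(i) equals the average of P(x) over all x ∈ {0,1}^n of Hamming weight i. -/
open Finset Polynomial Nat

lemma countL (n : ℕ) (S : Finset (Fin n)) (i : ℕ) (hsi : S.card ≤ i) :
    (Finset.univ.filter (fun x : Fin n → Bool =>
      (Finset.univ.filter (fun j => x j)).card = i ∧ ∀ j ∈ S, x j)).card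
    = (n - S.card).choose (i - S.card) := by
  have hc : (Finset.univ \ S : Finset (Fin n)).card = n - S.card := by
    rw [card_sdiff_of_subset (subset_univ S), Finset.card_univ, Fintype.card_fin]
  rw [← hc, ← Finset.card_powersetCard (i - S.card) (Finset.univ \ S)]
  · apply Finset.card_bij' (fun x _ => (Finset.univ.filter (fun j => x j)) \ S)
      (fun T _ => fun j => decide (j ∈ T ∪ S))
    · intro x hx
      simp only [mem_filter, mem_univ, true_and] at hx
      obtain ⟨hcard, hS⟩ := hx
      have hsub : S ⊆ Finset.univ.filter (fun j => x j) := by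
        intro j hj; simp [hS j hj]
      rw [mem_powersetCard]
      constructor
      · intro j hj
        simp only [mem_sdiff] at hj ⊢
        exact ⟨mem_univ j, hj.2⟩
      · rw [card_sdiff_of_subset hsub, hcard]
    · intro T hT
      rw [mem_powersetCard] at hT
      obtain ⟨hTsub, hTcard⟩ := hT
      have hdisj : Disjoint T S := by
        intro U hU1 hU2
        intro j hj
        have := hTsub (hU1 hj)
        simp only [mem_sdiff] at this
        exact absurd (hU2 hj) this.2
      have hfilt : Finset.univ.filter (fun j => decide (j ∈ T ∪ S) = true) = T ∪ S := by
        ext j; simp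
      simp only [mem_filter, mem_univ, true_and]
      refine ⟨?_, fun j hj => by simp [hj]⟩
      rw [hfilt, card_union_of_disjoint hdisj, hTcard, Nat.sub_add_cancel hsi]
    · intro x hx
      simp only [mem_filter, mem_univ, true_and] at hx
      funext j
      by_cases h : x j = true <;> simp [h, hx.2 j]
      · intro h2; exact h (hx.2 j h2)
    · intro T hT
      rw [mem_powersetCard] at hT
      have hfilt : Finset.univ.filter (fun j => decide (j ∈ T ∪ S) = true) = T ∪ S := by
        ext j; simp
      rw [hfilt, union_sdiff_right, sdiff_eq_self_of_disjoint]
      intro U hU1 hU2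
      intro j hj
      have := hT.1 (hU1 hj)
      simp only [mem_sdiff] at this
      exact absurd (hU2 hj) this.2

lemma countL0 (n : ℕ) (S : Finset (Fin n)) (i : ℕ) (hsi : i < S.card) :
    (Finset.univ.filter (fun x : Fin n → Bool =>
      (Finset.univ.filter (fun j => x j)).card = i ∧ ∀ j ∈ S, x j)).card = 0 := by
  rw [Finset.card_eq_zero, Finset.filter_eq_empty_iff]
  rintro x - ⟨hcard, hS⟩
  have hsub : S ⊆ Finset.univ.filter (fun j => x j) := by
    intro j hj; simp [hS j hj]
  have := Finset.card_le_card hsub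
  omega

theorem stmt15 (n d : ℕ) (P : MvPolynomial (Fin n) ℝ)
    (hml : ∀ v ∈ P.support, ∀ j, v j ≤ 1)
    (hdeg : P.totalDegree ≤ d) :
    ∃ p : Polynomial ℝ, p.degree ≤ (d : ℕ) ∧ ∀ i ≤ n,
      p.eval (i : ℝ) =
        (∑ x ∈ Finset.univ.filter
            (fun x : Fin n → Bool => (Finset.univ.filter (fun j => x j)).card = i),
          MvPolynomial.eval (fun j => if x j then (1 : ℝ) else 0) P) /
        ((Finset.univ.filter
            (fun x : Fin n → Bool => (Finset.univ.filter (fun j => x j)).card = i)).card : ℝ) := by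
  classical
  -- support cardinality bound
  have hsd : ∀ v ∈ P.support, v.support.card ≤ d := by
    intro v hv
    have h1 : v.support.card ≤ v.sum fun _ e => e := by
      rw [Finsupp.sum]
      calc v.support.card = ∑ _j ∈ v.support, 1 := by simp
        _ ≤ ∑ j ∈ v.support, v j :=
          Finset.sum_le_sum fun j hj => Nat.one_le_iff_ne_zero.2 (Finsupp.mem_support_iff.1 hj)
    exact h1.trans ((MvPolynomial.le_totalDegree hv).trans hdeg)
  refine ⟨∑ v ∈ P.support,
    Polynomial.C (P.coeff v / ((v.support.card)! * (n.choose v.support.card))) *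
      descPochhammer ℝ v.support.card, ?_, ?_⟩
  · refine (Polynomial.degree_sum_le _ _).trans ?_
    rw [Finset.sup_le_iff]
    intro v hv
    refine (Polynomial.degree_mul_le _ _).trans ?_
    have h1 : (Polynomial.C (P.coeff v / ((v.support.card)! * (n.choose v.support.card)))).degree ≤ 0 :=
      Polynomial.degree_C_le
    have h2 : (descPochhammer ℝ v.support.card).degree ≤ (v.support.card : WithBot ℕ) := by
      refine (Polynomial.degree_le_natDegree).trans ?_
      rw [descPochhammer_natDegree]
    calc _ ≤ 0 + (v.support.card : WithBot ℕ) := add_le_add h1 h2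
      _ = (v.support.card : WithBot ℕ) := zero_add _
      _ ≤ (d : WithBot ℕ) := by exact_mod_cast Nat.cast_le.2 (hsd v hv)
  · intro i hin
    set A := Finset.univ.filter
      (fun x : Fin n → Bool => (Finset.univ.filter (fun j => x j)).card = i) with hA
    have hAcard : A.card = n.choose i := by
      have : A = Finset.univ.filter (fun x : Fin n → Bool =>
          (Finset.univ.filter (fun j => x j)).card = i ∧ ∀ j ∈ (∅ : Finset (Fin n)), x j) := by
        simp [hA]
      rw [this, countL n ∅ i (by simp)]
      simp
    -- evaluate P at boolean points
    have hev : ∀ x ∈ A, MvPolynomial.eval (fun j => if x j then (1 : ℝ) else 0) P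
        = ∑ v ∈ P.support, P.coeff v * (if ∀ j ∈ v.support, x j then (1:ℝ) else 0) := by
      intro x _
      rw [MvPolynomial.eval_eq]
      refine Finset.sum_congr rfl fun v hv => ?_
      congr 1
      have hv1 : ∀ j ∈ v.support, v j = 1 := fun j hj =>
        le_antisymm (hml v hv j) (Nat.one_le_iff_ne_zero.2 (Finsupp.mem_support_iff.1 hj))
      by_cases h : ∀ j ∈ v.support, x j
      · rw [if_pos h]
        apply Finset.prod_eq_one
        intro j hj
        rw [hv1 j hj]
        simp [h j hj]
      · rw [if_neg h]
        push_neg at h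
        obtain ⟨j, hj, hxj⟩ := h
        apply Finset.prod_eq_zero hj
        rw [hv1 j hj]
        simp [hxj]
    have hnum : (∑ x ∈ A, MvPolynomial.eval (fun j => if x j then (1 : ℝ) else 0) P)
        = ∑ v ∈ P.support, P.coeff v *
          ((Finset.univ.filter (fun x : Fin n → Bool =>
            (Finset.univ.filter (fun j => x j)).card = i ∧ ∀ j ∈ v.support, x j)).card : ℝ) := by
      rw [Finset.sum_congr rfl hev, Finset.sum_comm]
      refine Finset.sum_congr rfl fun v _ => ?_
      rw [← Finset.mul_sum, Finset.sum_boole, hA, Finset.filter_filter]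
    rw [hnum, Polynomial.eval_finset_sum, hAcard, Finset.sum_div]
    refine Finset.sum_congr rfl fun v hv => ?_
    simp only [Polynomial.eval_mul, Polynomial.eval_C]
    rw [descPochhammer_eval_eq_descFactorial]
    set s := v.support.card with hs
    by_cases hsi : s ≤ i
    · rw [countL n v.support i hsi, Nat.descFactorial_eq_factorial_mul_choose]
      have hkey : n.choose i * i.choose s = n.choose s * (n - s).choose (i - s) :=
        Nat.choose_mul hsi
      have h1 : (s ! : ℝ) ≠ 0 := Nat.cast_ne_zero.2 (Nat.factorial_ne_zero s)
      have h3 : ((n.choose i : ℝ)) ≠ 0 := Nat.cast_ne_zero.2 (Nat.choose_pos hin).ne'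
      have h2' : ((n.choose s : ℝ)) ≠ 0 := Nat.cast_ne_zero.2 (Nat.choose_pos (hsi.trans hin)).ne'
      have hcast : ((n.choose i : ℝ)) * (i.choose s) = (n.choose s) * ((n - s).choose (i - s)) := by
        exact_mod_cast congrArg (fun m : ℕ => (m : ℝ)) hkey
      field_simp
      simp only [← hs]
      push_cast
      linear_combination (MvPolynomial.coeff v P * (s ! : ℝ)) * hcast
    · push_neg at hsi
      rw [countL0 n v.support i hsi, Nat.descFactorial_eq_zero_iff_lt.2 hsi]
      simp
end

section
/- Let n, k be even positive integers with k < n. Then (k!·(n-k)!·n^k) / ((k/2)!²·n!·2^k) · (1/(2n)^k) · √((n+k)!/(n-k)!) ≤ Poly(n) · ((n-k)^{(n-k)/2}·(n+k)^{(n+k)/2}) / (2^k·n^n), where Poly(n) is some fixed polynomial in n (e.g., n^5 suffices). -/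
open Real

private lemma fact_lower : ∀ n : ℕ, (n : ℝ) ^ n ≤ (Nat.factorial n : ℝ) * Real.exp 1 ^ n := by
  intro n
  induction n with
  | zero => simp
  | succ n ih =>
    have key : ((n : ℝ) + 1) ^ n ≤ Real.exp 1 * (n : ℝ) ^ n := by
      rcases Nat.eq_zero_or_pos n with h | h
      · subst h; simpa using Real.one_le_exp (by norm_num : (0:ℝ) ≤ 1)
      · have hn : (0:ℝ) < n := by exact_mod_cast h
        have h1 : (n : ℝ) + 1 ≤ Real.exp (1 / n) * n := by
          have h2 := Real.add_one_le_exp (1 / (n : ℝ))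
          have hinv : (1 / (n:ℝ)) * n = 1 := by field_simp
          nlinarith [mul_le_mul_of_nonneg_right h2 hn.le]
        calc ((n:ℝ)+1)^n ≤ (Real.exp (1/n) * n)^n :=
              pow_le_pow_left₀ (by positivity) h1 n
          _ = Real.exp 1 * (n:ℝ)^n := by
              rw [mul_pow, ← Real.exp_nat_mul]
              congr 2
              field_simp
    have hE : (0:ℝ) < Real.exp 1 ^ n := by positivity
    have hcast : ((n+1 : ℕ).factorial : ℝ) = ((n:ℝ)+1) * (Nat.factorial n : ℝ) := by
      rw [Nat.factorial_succ]; push_cast; ring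
    calc ((n+1 : ℕ) : ℝ) ^ (n+1) = ((n:ℝ)+1) * ((n:ℝ)+1)^n := by push_cast; ring
      _ ≤ ((n:ℝ)+1) * (Real.exp 1 * (n:ℝ)^n) := by
          apply mul_le_mul_of_nonneg_left key (by positivity)
      _ ≤ ((n:ℝ)+1) * (Real.exp 1 * ((Nat.factorial n : ℝ) * Real.exp 1 ^ n)) := by
          apply mul_le_mul_of_nonneg_left _ (by positivity)
          exact mul_le_mul_of_nonneg_left ih (le_of_lt (Real.exp_pos 1))
      _ = ((n+1 : ℕ).factorial : ℝ) * Real.exp 1 ^ (n+1) := by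
          rw [hcast]; ring

private lemma fact_upper : ∀ m : ℕ, 1 ≤ m →
    (Nat.factorial m : ℝ) * Real.exp 1 ^ m ≤ Real.exp 1 * m * (m : ℝ) ^ m := by
  intro m hm
  induction m with
  | zero => omega
  | succ m ih =>
    rcases Nat.eq_zero_or_pos m with h | h
    · subst h; simp
    · have ih' := ih h
      have hm0 : (0:ℝ) < m := by exact_mod_cast h
      -- key : exp 1 * m ^ (m+1) ≤ (m+1) ^ (m+1)
      have h1 : (m : ℝ) * Real.exp (1/((m:ℝ)+1)) ≤ (m:ℝ) + 1 := by
        have hle := Real.add_one_le_exp (-(1/((m:ℝ)+1)))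
        have hle' : (m : ℝ)/((m:ℝ)+1) ≤ Real.exp (-(1/((m:ℝ)+1))) := by
          have : (m:ℝ)/((m:ℝ)+1) = -(1/((m:ℝ)+1)) + 1 := by field_simp; ring
          linarith [this ▸ hle]
        have hts : Real.exp (1/((m:ℝ)+1)) * Real.exp (-(1/((m:ℝ)+1))) = 1 := by
          rw [← Real.exp_add]; simp
        have h3 := mul_le_mul_of_nonneg_left hle' (le_of_lt (Real.exp_pos (1/((m:ℝ)+1))))
        rw [hts] at h3
        rw [← mul_div_assoc, div_le_one (by positivity)] at h3
        linarith
      have key : Real.exp 1 * (m:ℝ) ^ (m+1) ≤ ((m:ℝ)+1) ^ (m+1) := by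
        calc Real.exp 1 * (m:ℝ) ^ (m+1)
            = ((m:ℝ) * Real.exp (1/((m:ℝ)+1))) ^ (m+1) := by
              rw [mul_pow, ← Real.exp_nat_mul]
              rw [show ((m+1 : ℕ) : ℝ) * (1/((m:ℝ)+1)) = 1 by push_cast; field_simp]
              ring
          _ ≤ ((m:ℝ)+1) ^ (m+1) := pow_le_pow_left₀ (by positivity) h1 (m+1)
      have hcast : ((m+1 : ℕ).factorial : ℝ) = ((m:ℝ)+1) * (Nat.factorial m : ℝ) := by
        rw [Nat.factorial_succ]; push_cast; ring
      calc ((m+1:ℕ).factorial : ℝ) * Real.exp 1 ^ (m+1)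
          = ((m:ℝ)+1) * Real.exp 1 * ((Nat.factorial m : ℝ) * Real.exp 1 ^ m) := by
            rw [hcast]; ring
        _ ≤ ((m:ℝ)+1) * Real.exp 1 * (Real.exp 1 * m * (m:ℝ)^m) := by
            apply mul_le_mul_of_nonneg_left ih' (by positivity)
        _ = ((m:ℝ)+1) * Real.exp 1 * (Real.exp 1 * (m:ℝ)^(m+1)) := by ring
        _ ≤ ((m:ℝ)+1) * Real.exp 1 * (((m:ℝ)+1)^(m+1)) := by
            apply mul_le_mul_of_nonneg_left key (by positivity)
        _ = Real.exp 1 * ((m+1:ℕ):ℝ) * (((m+1:ℕ):ℝ))^(m+1) := by push_cast; ring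

set_option maxHeartbeats 1000000 in
theorem stmt19 (n k : ℕ) (hn : Even n) (hk : Even k) (hk0 : 0 < k) (hkn : k < n) :
    ((Nat.factorial k : ℝ) * (Nat.factorial (n - k) : ℝ) * (n : ℝ)^k) /
        ((Nat.factorial (k / 2) : ℝ)^2 * (Nat.factorial n : ℝ) * 2^k) *
      (1 / (2 * (n : ℝ))^k) *
      Real.sqrt ((Nat.factorial (n + k) : ℝ) / (Nat.factorial (n - k) : ℝ)) ≤
    (n : ℝ)^5 * (((n - k : ℕ) : ℝ)^((n - k) / 2) * ((n + k : ℕ) : ℝ)^((n + k) / 2)) /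
      (2^k * (n : ℝ)^n) := by
  obtain ⟨K, hK⟩ := hk
  obtain ⟨N, hN⟩ := hn
  set a := n - k with ha
  set b := n + k with hb
  have hk2 : 2 ≤ k := by omega
  have hn4 : 4 ≤ n := by omega
  have ha1 : 1 ≤ a := by omega
  have hb1 : 1 ≤ b := by omega
  have hEa : Even a := by exact ⟨N - K, by omega⟩
  have hEb : Even b := ⟨N + K, by omega⟩
  have hab : a + b = 2 * n := by omega
  have hk2' : k / 2 = K := by omega
  have hkk : k - k / 2 = k / 2 := by omega
  have Fa_pos : (0:ℝ) < (Nat.factorial a : ℝ) := by exact_mod_cast Nat.factorial_pos a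
  have Fb_pos : (0:ℝ) < (Nat.factorial b : ℝ) := by exact_mod_cast Nat.factorial_pos b
  have Fn_pos : (0:ℝ) < (Nat.factorial n : ℝ) := by exact_mod_cast Nat.factorial_pos n
  have F2_pos : (0:ℝ) < (Nat.factorial (k/2) : ℝ) := by exact_mod_cast Nat.factorial_pos (k/2)
  have hnR : (0:ℝ) < n := by
    have : 0 < n := by omega
    exact_mod_cast this
  -- Step 1: rewrite the LHS
  have hch : (k.choose (k/2) : ℝ) * ((Nat.factorial (k/2) : ℝ))^2 = (Nat.factorial k : ℝ) := by
    have h := Nat.choose_mul_factorial_mul_factorial (Nat.div_le_self k 2)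
    rw [hkk] at h
    have : (k.choose (k/2)) * (Nat.factorial (k/2)) * (Nat.factorial (k/2)) = Nat.factorial k := h
    exact_mod_cast by rw [← this]; ring
  have hsqrt : Real.sqrt ((Nat.factorial b : ℝ) / (Nat.factorial a : ℝ)) =
      Real.sqrt ((Nat.factorial a : ℝ) * (Nat.factorial b : ℝ)) / (Nat.factorial a : ℝ) := by
    rw [show (Nat.factorial b : ℝ) / (Nat.factorial a : ℝ) =
        ((Nat.factorial a : ℝ) * (Nat.factorial b : ℝ)) / ((Nat.factorial a : ℝ))^2 by
      field_simp]
    rw [Real.sqrt_div (by positivity), Real.sqrt_sq (le_of_lt Fa_pos)]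
  have h4 : (4:ℝ)^k = 2^k * 2^k := by rw [← mul_pow]; norm_num
  have hLHS : ((Nat.factorial k : ℝ) * (Nat.factorial a : ℝ) * (n : ℝ)^k) /
        ((Nat.factorial (k / 2) : ℝ)^2 * (Nat.factorial n : ℝ) * 2^k) *
      (1 / (2 * (n : ℝ))^k) *
      Real.sqrt ((Nat.factorial b : ℝ) / (Nat.factorial a : ℝ)) =
      (k.choose (k/2) : ℝ) * Real.sqrt ((Nat.factorial a : ℝ) * (Nat.factorial b : ℝ)) /
        ((Nat.factorial n : ℝ) * 4^k) := by
    rw [hsqrt, ← hch, mul_pow (2:ℝ) (n:ℝ) k, h4]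
    field_simp
  rw [hLHS]
  -- Step 2: bound the central binomial coefficient
  have hchle : (k.choose (k/2) : ℝ) ≤ 2^k := by
    have h1 : k.choose (k/2) ≤ 2^k := by
      calc k.choose (k/2) ≤ ∑ i ∈ Finset.range (k+1), k.choose i := by
            apply Finset.single_le_sum (f := fun i => k.choose i)
            · intro i _; exact Nat.zero_le _
            · simp [Nat.lt_succ_iff, Nat.div_le_self]
        _ = 2^k := Nat.sum_range_choose k
    exact_mod_cast h1
  have sqrtS_nonneg : (0:ℝ) ≤ Real.sqrt ((Nat.factorial a : ℝ) * (Nat.factorial b : ℝ)) :=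
    Real.sqrt_nonneg _
  -- Step 3: the key Stirling-type bound
  have hA : (((a:ℕ):ℝ)^(a/2))^2 = (a:ℝ)^a := by
    rw [← pow_mul, Nat.div_two_mul_two_of_even hEa]
  have hB : (((b:ℕ):ℝ)^(b/2))^2 = (b:ℝ)^b := by
    rw [← pow_mul, Nat.div_two_mul_two_of_even hEb]
  have hfin : Real.exp 1 ^ 2 * (a:ℝ) * (b:ℝ) ≤ (n:ℝ)^10 := by
    have hE3 : Real.exp 1 ≤ 3 := le_of_lt (lt_trans Real.exp_one_lt_d9 (by norm_num))
    have haN : (a:ℝ) ≤ (n:ℝ) := by exact_mod_cast Nat.cast_le.2 (by omega : a ≤ n)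
    have hbN : (b:ℝ) ≤ 2 * (n:ℝ) := by
      have : (b:ℕ) ≤ 2 * n := by omega
      calc (b:ℝ) ≤ ((2*n : ℕ):ℝ) := by exact_mod_cast this
        _ = 2 * (n:ℝ) := by push_cast; ring
    have hn4' : (4:ℝ) ≤ (n:ℝ) := by exact_mod_cast Nat.cast_le.2 hn4
    have h8 : (4:ℝ)^8 ≤ (n:ℝ)^8 := pow_le_pow_left₀ (by norm_num) hn4' 8
    have h18 : (18:ℝ) ≤ (n:ℝ)^8 := le_trans (by norm_num) h8
    calc Real.exp 1 ^ 2 * (a:ℝ) * (b:ℝ) ≤ 3^2 * (n:ℝ) * (2 * (n:ℝ)) := by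
          gcongr <;> positivity
      _ ≤ (n:ℝ)^10 := by nlinarith [mul_le_mul_of_nonneg_right h18 (sq_nonneg (n:ℝ))]
  have hsq : (Nat.factorial a : ℝ) * (Nat.factorial b : ℝ) * (((n:ℝ)^n))^2 ≤
      ((n:ℝ)^5 * (((a:ℕ):ℝ)^(a/2) * ((b:ℕ):ℝ)^(b/2)) * (Nat.factorial n : ℝ))^2 := by
    rw [← mul_le_mul_iff_of_pos_right (show (0:ℝ) < (Real.exp 1 ^ n)^2 by positivity)]
    have h1 := fact_upper a ha1
    have h2 := fact_upper b hb1
    have h3 := fact_lower n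
    have hEE : Real.exp 1 ^ a * Real.exp 1 ^ b = (Real.exp 1 ^ n)^2 := by
      rw [← pow_add, ← pow_mul]
      congr 1
      omega
    calc (Nat.factorial a : ℝ) * (Nat.factorial b : ℝ) * ((n:ℝ)^n)^2 * (Real.exp 1 ^ n)^2
        = ((Nat.factorial a : ℝ) * Real.exp 1 ^ a) * ((Nat.factorial b : ℝ) * Real.exp 1 ^ b) *
          ((n:ℝ)^n)^2 := by rw [← hEE]; ring
      _ ≤ (Real.exp 1 * a * (a:ℝ)^a) * (Real.exp 1 * b * (b:ℝ)^b) *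
          (((Nat.factorial n : ℝ) * Real.exp 1 ^ n))^2 := by
          apply mul_le_mul (mul_le_mul h1 h2 (by positivity) (by positivity))
            (pow_le_pow_left₀ (by positivity) h3 2) (by positivity) (by positivity)
      _ = (Real.exp 1 ^ 2 * (a:ℝ) * (b:ℝ)) *
          ((a:ℝ)^a * (b:ℝ)^b * (Nat.factorial n : ℝ)^2 * (Real.exp 1 ^ n)^2) := by ring
      _ ≤ (n:ℝ)^10 *
          ((a:ℝ)^a * (b:ℝ)^b * (Nat.factorial n : ℝ)^2 * (Real.exp 1 ^ n)^2) := by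
          apply mul_le_mul_of_nonneg_right hfin (by positivity)
      _ = ((n:ℝ)^5 * (((a:ℕ):ℝ)^(a/2) * ((b:ℕ):ℝ)^(b/2)) * (Nat.factorial n : ℝ))^2 *
          (Real.exp 1 ^ n)^2 := by rw [← hA, ← hB]; ring
  have hK : Real.sqrt ((Nat.factorial a : ℝ) * (Nat.factorial b : ℝ)) * (n:ℝ)^n ≤
      (n:ℝ)^5 * (((a:ℕ):ℝ)^(a/2) * ((b:ℕ):ℝ)^(b/2)) * (Nat.factorial n : ℝ) := by
    have e1 : Real.sqrt ((Nat.factorial a : ℝ) * (Nat.factorial b : ℝ) * ((n:ℝ)^n)^2) =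
        Real.sqrt ((Nat.factorial a : ℝ) * (Nat.factorial b : ℝ)) * (n:ℝ)^n := by
      rw [Real.sqrt_mul (by positivity), Real.sqrt_sq (by positivity)]
    have e2 : (n:ℝ)^5 * (((a:ℕ):ℝ)^(a/2) * ((b:ℕ):ℝ)^(b/2)) * (Nat.factorial n : ℝ) =
        Real.sqrt (((n:ℝ)^5 * (((a:ℕ):ℝ)^(a/2) * ((b:ℕ):ℝ)^(b/2)) *
          (Nat.factorial n : ℝ))^2) := by
      rw [Real.sqrt_sq (by positivity)]
    rw [e2, ← e1]
    exact Real.sqrt_le_sqrt hsq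
  -- Finish
  calc (k.choose (k/2) : ℝ) * Real.sqrt ((Nat.factorial a : ℝ) * (Nat.factorial b : ℝ)) /
        ((Nat.factorial n : ℝ) * 4^k)
      ≤ 2^k * Real.sqrt ((Nat.factorial a : ℝ) * (Nat.factorial b : ℝ)) /
        ((Nat.factorial n : ℝ) * 4^k) := by gcongr
    _ = Real.sqrt ((Nat.factorial a : ℝ) * (Nat.factorial b : ℝ)) /
        ((Nat.factorial n : ℝ) * 2^k) := by rw [h4]; field_simp
    _ ≤ (n : ℝ)^5 * (((a:ℕ):ℝ)^(a/2) * ((b:ℕ):ℝ)^(b/2)) / (2^k * (n : ℝ)^n) := by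
        rw [div_le_div_iff₀ (by positivity) (by positivity)]
        nlinarith [mul_le_mul_of_nonneg_right hK (show (0:ℝ) ≤ 2^k by positivity)]
end
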